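/- Let s ∈ (0,1) and f ∈ L²(ℝ/ℤ,ℝⁿ) with [f]_{H^{s,2}} < ∞. Then for all τ₁, τ₂ ∈ [0,1]: ∫_{−1/2}^{1/2} ( ∫_{ℝ/ℤ} |f(u+τ₁w) − f(u+τ₂w)|² du ) / |w|^{1+2s} dw ≤ |τ₁−τ₂|^{2s} · [f]²_{H^{s,2}}. -/

import Mathlib

open MeasureTheory Filter Set
open scoped RealInnerProductSpace ENNReal Topology

noncomputable section

/-- `ℝⁿ` -/
abbrev Rn (n : ℕ) := EuclideanSpace ℝ (Fin n)

variable {n : ℕ}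

/-- A 1-periodic curve is injective as a map on `ℝ/ℤ`. -/
def PerInjective (γ : ℝ → Rn n) : Prop :=
  ∀ u v : ℝ, γ u = γ v → ∃ k : ℤ, v = u + k

/-- `γ` is a regular curve: `γ'(u) ≠ 0` for all `u`. -/
def RegularCurve (γ : ℝ → Rn n) : Prop := ∀ u : ℝ, deriv γ u ≠ 0

/-- `γ` is parametrized by arc-length: `|γ'(u)| = 1` for all `u`. -/
def ArcLengthParam (γ : ℝ → Rn n) : Prop := ∀ u : ℝ, ‖deriv γ u‖ = 1

/-- The length `L(γ) = ∫₀¹ |γ'(θ)| dθ` of the closed curve `γ`. -/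
def curveLen (γ : ℝ → Rn n) : ℝ := ∫ θ in (0:ℝ)..1, ‖deriv γ θ‖

/-- The arc length `L(γ|_{[u,u+w]}) = |∫_u^{u+w} |γ'(θ)| dθ|`. -/
def arcLen (γ : ℝ → Rn n) (u w : ℝ) : ℝ := |∫ θ in u..(u + w), ‖deriv γ θ‖|

/-- The intrinsic distance `d_γ(u+w,u)`. -/
def idist (γ : ℝ → Rn n) (u w : ℝ) : ℝ :=
  min (arcLen γ u w) (curveLen γ - arcLen γ u w)

/-- The integrand of the O'Hara energy `E^α`. -/
def ohIntegrand (α : ℝ) (γ : ℝ → Rn n) (u w : ℝ) : ℝ :=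
  (1 / ‖γ (u + w) - γ u‖ ^ α - 1 / idist γ u w ^ α) * ‖deriv γ (u + w)‖ * ‖deriv γ u‖

/-- The O'Hara energy `E^α`, with values in `[0,∞]`. -/
def oharaE (α : ℝ) (γ : ℝ → Rn n) : ℝ≥0∞ :=
  ∫⁻ u in Ioc (0:ℝ) 1, ∫⁻ w in Ioo (-(1:ℝ)/2) (1/2), ENNReal.ofReal (ohIntegrand α γ u w)

/-- The O'Hara energy `E^α` as a real number. -/
def oharaER (α : ℝ) (γ : ℝ → Rn n) : ℝ := (oharaE α γ).toReal

/-- `[−1/2,−ε] ∪ [ε,1/2]`, the `w`-section of `U_ε`. -/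
def Wset (ε : ℝ) : Set ℝ := Icc (-(1:ℝ)/2) (-ε) ∪ Icc ε (1/2)

/-- The truncated O'Hara energy `E^α_ε`, an integral over `U_ε`. -/
def oharaEeps (α ε : ℝ) (γ : ℝ → Rn n) : ℝ :=
  ∫ u in Ioc (0:ℝ) 1, ∫ w in Wset ε, ohIntegrand α γ u w

/-- `F` has directional (Gâteaux) derivative `d` at `γ` in direction `h`. -/
def HasDirDeriv (F : (ℝ → Rn n) → ℝ) (γ h : ℝ → Rn n) (d : ℝ) : Prop :=
  Tendsto (fun τ : ℝ => (F (γ + τ • h) - F γ) / τ) (𝓝[≠] (0:ℝ)) (𝓝 d)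

/-- Squared Gagliardo seminorm `[f]²_{H^{s,2}}` of a 1-periodic map. -/
def gagliardoSq (s : ℝ) {E : Type*} [NormedAddCommGroup E] (f : ℝ → E) : ℝ≥0∞ :=
  ∫⁻ u in Ioc (0:ℝ) 1, ∫⁻ w in Ioo (-(1:ℝ)/2) (1/2),
    ENNReal.ofReal (‖f (u + w) - f u‖ ^ 2 / |w| ^ (1 + 2 * s))

/-- Membership in the fractional Sobolev space `H^{1+σ,2}(ℝ/ℤ,ℝⁿ)`, `σ ∈ (0,1)`:
a 1-periodic `C¹` function whose derivative has finite Gagliardo seminorm of order `σ`. -/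
def MemH1 (σ : ℝ) (γ : ℝ → Rn n) : Prop :=
  Function.Periodic γ 1 ∧ ContDiff ℝ 1 γ ∧ gagliardoSq σ (deriv γ) < ⊤

/-- The norm of `H^{1+σ,2}(ℝ/ℤ,ℝⁿ)`. -/
def H1Norm (σ : ℝ) (γ : ℝ → Rn n) : ℝ :=
  Real.sqrt (∫ u in Ioc (0:ℝ) 1, (‖γ u‖ ^ 2 + ‖deriv γ u‖ ^ 2)) +
    Real.sqrt ((gagliardoSq σ (deriv γ)).toReal)

/-- Membership of a 1-periodic map in `L²(ℝ/ℤ)`. -/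
def MemL2per {E : Type*} [NormedAddCommGroup E] (f : ℝ → E) : Prop :=
  Function.Periodic f 1 ∧ AEStronglyMeasurable f (volume : Measure ℝ) ∧
    IntegrableOn (fun u => ‖f u‖ ^ 2) (Ioc (0:ℝ) 1) volume

/-- Membership in the fractional Sobolev space `H^{s,2}(ℝ/ℤ)`, `s ∈ (0,1)`. -/
def MemHs0 (s : ℝ) {E : Type*} [NormedAddCommGroup E] (f : ℝ → E) : Prop :=
  MemL2per f ∧ gagliardoSq s f < ⊤

/-- The norm of `H^{s,2}(ℝ/ℤ)` for `s ∈ (0,1)`: `‖f‖_{L²} + [f]_{H^{s,2}}`. -/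
def Hs0Norm (s : ℝ) {E : Type*} [NormedAddCommGroup E] (f : ℝ → E) : ℝ :=
  Real.sqrt (∫ u in Ioc (0:ℝ) 1, ‖f u‖ ^ 2) + Real.sqrt ((gagliardoSq s f).toReal)

/-- The `k`-th Fourier coefficient (`j`-th component) of a 1-periodic curve. -/
def fCoef (γ : ℝ → Rn n) (k : ℤ) (j : Fin n) : ℂ :=
  ∫ u in (0:ℝ)..1, (γ u j : ℂ) * Complex.exp ((-2) * (Real.pi : ℂ) * Complex.I * (k : ℂ) * (u : ℂ))

/-- Membership in `H^{s,2}(ℝ/ℤ,ℝⁿ)` via the Fourier characterization: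
`((1+|k|²)^{s/2} γ̂(k))_k ∈ ℓ²`. -/
def MemHF (s : ℝ) (γ : ℝ → Rn n) : Prop :=
  Function.Periodic γ 1 ∧ Continuous γ ∧
    Summable (fun k : ℤ => (1 + (k : ℝ) ^ 2) ^ s * ∑ j, ‖fCoef γ k j‖ ^ 2)

/-- The squared Fourier norm of `H^{s,2}(ℝ/ℤ,ℝⁿ)`. -/
def fNormSq (s : ℝ) (γ : ℝ → Rn n) : ℝ :=
  ∑' k : ℤ, (1 + (k : ℝ) ^ 2) ^ s * ∑ j, ‖fCoef γ k j‖ ^ 2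

/-- C¹-norm of a 1-periodic map. -/
def c1Norm (f : ℝ → Rn n) : ℝ := ⨆ u : Icc (0:ℝ) 1, (‖f u.1‖ + ‖deriv f u.1‖)

/-- The integrand of `Q(γ,h)`. -/
def Qintegrand (α : ℝ) (γ h : ℝ → Rn n) (u w : ℝ) : ℝ :=
  ⟪deriv γ u, deriv h u⟫ / |w| ^ α
    - ⟪γ (u + w) - γ u, h (u + w) - h u⟫ / |w| ^ (α + 2)

/-- The integrand of `R(γ,h)`. -/
def Rintegrand (α : ℝ) (γ h : ℝ → Rn n) (u w : ℝ) : ℝ :=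
  2 * ⟪deriv γ u, deriv h u⟫ * (1 / ‖γ (u + w) - γ u‖ ^ α - 1 / |w| ^ α)
    - α * ⟪γ (u + w) - γ u, h (u + w) - h u⟫ *
        (1 / ‖γ (u + w) - γ u‖ ^ (α + 2) - 1 / |w| ^ (α + 2))

/-- `R(γ,h)`, an absolutely convergent double integral over `(ℝ/ℤ) × [−1/2,1/2]`. -/
def Rval (α : ℝ) (γ h : ℝ → Rn n) : ℝ :=
  ∫ p in (Ioc (0:ℝ) 1) ×ˢ (Icc (-(1:ℝ)/2) (1/2)), Rintegrand α γ h p.1 p.2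

lemma lintegral_Ioc01_comp_add (g : ℝ → ℝ≥0∞) (hg : Function.Periodic g 1) (c : ℝ) :
    ∫⁻ u in Ioc (0:ℝ) 1, g (u + c) = ∫⁻ u in Ioc (0:ℝ) 1, g u := by
  have hmp : MeasurePreserving (fun x : ℝ => x + c) volume volume :=
    measurePreserving_add_right volume c
  have hemb : MeasurableEmbedding (fun x : ℝ => x + c) :=
    (Homeomorph.addRight c).measurableEmbedding
  have hpre : (fun x : ℝ => x + c) ⁻¹' (Ioc c (c + 1)) = Ioc (0:ℝ) 1 := by
    ext x
    simp only [mem_preimage, mem_Ioc]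
    constructor
    · rintro ⟨h1, h2⟩; exact ⟨by linarith, by linarith⟩
    · rintro ⟨h1, h2⟩; exact ⟨by linarith, by linarith⟩
  have h1 : ∫⁻ u in Ioc (0:ℝ) 1, g (u + c) = ∫⁻ u in Ioc c (c + 1), g u := by
    rw [← hpre, hmp.setLIntegral_comp_emb hemb]
    rw [Set.image_preimage_eq (Ioc c (c+1)) fun y => ⟨y - c, by ring⟩]
  rw [h1]
  haveI : VAddInvariantMeasure (AddSubgroup.zmultiples (1:ℝ)) ℝ volume :=
    ⟨fun c s _ => measure_preimage_add _ _ _⟩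
  have h2 := (isAddFundamentalDomain_Ioc (T := 1) one_pos c volume).setLIntegral_eq
    (isAddFundamentalDomain_Ioc (T := 1) one_pos 0 volume) g hg.map_vadd_zmultiples
  simpa using h2

/-- For `s ∈ (0,1)` and `f ∈ L²(ℝ/ℤ,ℝⁿ)` with finite Gagliardo seminorm,
`∫_{−1/2}^{1/2} ‖f(·+τ₁w) − f(·+τ₂w)‖²_{L²} / |w|^{1+2s} dw ≤ |τ₁−τ₂|^{2s} [f]²_{H^{s,2}}`. -/
theorem statement15 {n : ℕ} {s : ℝ} (hs : s ∈ Ioo (0:ℝ) 1) {f : ℝ → Rn n}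
    (hf : MemL2per f) (hfin : gagliardoSq s f < ⊤) :
    ∀ τ₁ ∈ Icc (0:ℝ) 1, ∀ τ₂ ∈ Icc (0:ℝ) 1,
      (∫⁻ w in Ioo (-(1:ℝ)/2) (1/2),
          (∫⁻ u in Ioc (0:ℝ) 1, ENNReal.ofReal (‖f (u + τ₁ * w) - f (u + τ₂ * w)‖ ^ 2)) /
            ENNReal.ofReal (|w| ^ (1 + 2 * s)))
        ≤ ENNReal.ofReal (|τ₁ - τ₂| ^ (2 * s)) * gagliardoSq s f := by
  obtain ⟨hper, hmeas, -⟩ := hf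
  obtain ⟨hs0, hs1⟩ := hs
  have hexp_nonneg : (0:ℝ) ≤ 1 + 2 * s := by linarith
  intro τ₁ hτ₁ τ₂ hτ₂
  set τ : ℝ := τ₁ - τ₂ with hτdef
  have hτle : |τ| ≤ 1 := by
    rw [abs_le]; constructor <;> [skip; skip] <;>
      · obtain ⟨a1, a2⟩ := hτ₁; obtain ⟨b1, b2⟩ := hτ₂; simp only [hτdef]; linarith
  -- measurable representative
  obtain ⟨f', hf'sm, hff'⟩ := hmeas
  have hf'm : Measurable f' := hf'sm.measurable
  -- the L² modulus of continuity
  set G : ℝ → ℝ≥0∞ :=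
    fun t => ∫⁻ u in Ioc (0:ℝ) 1, ENNReal.ofReal (‖f (u + t) - f u‖ ^ 2) with hGdef
  set G' : ℝ → ℝ≥0∞ :=
    fun t => ∫⁻ u in Ioc (0:ℝ) 1, ENNReal.ofReal (‖f' (u + t) - f' u‖ ^ 2) with hG'def
  have hGG' : ∀ t, G t = G' t := by
    intro t
    refine lintegral_congr_ae ?_
    have h1 : (fun u : ℝ => f (u + t)) =ᵐ[volume] fun u => f' (u + t) :=
      (measurePreserving_add_right volume t).quasiMeasurePreserving.ae_eq_comp hff'
    filter_upwards [ae_restrict_of_ae h1, ae_restrict_of_ae hff'] with u h1u h2u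
    rw [h1u, h2u]
  have hG'0 : G' 0 = 0 := by
    simp [hG'def]
  -- Step 1: rewrite the inner integral using periodicity
  have step1 : ∀ w : ℝ,
      (∫⁻ u in Ioc (0:ℝ) 1, ENNReal.ofReal (‖f (u + τ₁ * w) - f (u + τ₂ * w)‖ ^ 2))
        = G' (τ * w) := by
    intro w
    have hgper : Function.Periodic
        (fun u : ℝ => ENNReal.ofReal (‖f (u + τ * w) - f u‖ ^ 2)) 1 := by
      intro u
      have e1 : u + 1 + τ * w = (u + τ * w) + 1 := by ring
      simp only [e1, hper (u + τ * w), hper u]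
    have key : (fun u : ℝ => ENNReal.ofReal (‖f (u + τ₁ * w) - f (u + τ₂ * w)‖ ^ 2))
        = fun u : ℝ => ENNReal.ofReal (‖f ((u + τ₂ * w) + τ * w) - f (u + τ₂ * w)‖ ^ 2) := by
      funext u
      rw [show (u + τ₂ * w) + τ * w = u + τ₁ * w by rw [hτdef]; ring]
    calc (∫⁻ u in Ioc (0:ℝ) 1, ENNReal.ofReal (‖f (u + τ₁ * w) - f (u + τ₂ * w)‖ ^ 2))
        = ∫⁻ u in Ioc (0:ℝ) 1,
            ENNReal.ofReal (‖f ((u + τ₂ * w) + τ * w) - f (u + τ₂ * w)‖ ^ 2) := by rw [key]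
      _ = G (τ * w) := lintegral_Ioc01_comp_add _ hgper (τ₂ * w)
      _ = G' (τ * w) := hGG' _
  have hLHS : (∫⁻ w in Ioo (-(1:ℝ)/2) (1/2),
        (∫⁻ u in Ioc (0:ℝ) 1, ENNReal.ofReal (‖f (u + τ₁ * w) - f (u + τ₂ * w)‖ ^ 2)) /
          ENNReal.ofReal (|w| ^ (1 + 2 * s)))
      = ∫⁻ w in Ioo (-(1:ℝ)/2) (1/2), G' (τ * w) / ENNReal.ofReal (|w| ^ (1 + 2 * s)) :=
    lintegral_congr fun w => by rw [step1]
  rw [hLHS]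
  by_cases hτ0 : τ = 0
  · have hz : ∀ w : ℝ, G' (τ * w) / ENNReal.ofReal (|w| ^ (1 + 2 * s)) = 0 := by
      intro w
      rw [hτ0, zero_mul, hG'0, ENNReal.zero_div]
    rw [lintegral_congr hz]
    simp
  -- now τ ≠ 0
  have habs : (0:ℝ) < |τ| := abs_pos.mpr hτ0
  -- measurability on the product
  have hmA : Measurable fun p : ℝ × ℝ => ENNReal.ofReal
      (‖f' (p.1 + p.2) - f' p.1‖ ^ 2 / |p.2| ^ (1 + 2 * s)) := by
    apply ENNReal.measurable_ofReal.comp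
    apply Measurable.div
    · exact ((hf'm.comp measurable_add).sub (hf'm.comp measurable_fst)).norm.pow_const 2
    · exact ((Real.continuous_rpow_const hexp_nonneg).measurable).comp measurable_snd.abs
  -- Tonelli + a.e. rewriting: the Gagliardo seminorm as a single w-integral
  have hgag : gagliardoSq s f
      = ∫⁻ w in Ioo (-(1:ℝ)/2) (1/2), G' w / ENNReal.ofReal (|w| ^ (1 + 2 * s)) := by
    have e1 : gagliardoSq s f = ∫⁻ u in Ioc (0:ℝ) 1, ∫⁻ w in Ioo (-(1:ℝ)/2) (1/2),
        ENNReal.ofReal (‖f' (u + w) - f' u‖ ^ 2 / |w| ^ (1 + 2 * s)) := by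
      rw [gagliardoSq]
      refine lintegral_congr_ae ?_
      filter_upwards [ae_restrict_of_ae hff'] with u hu
      refine lintegral_congr_ae ?_
      have h1 : (fun w : ℝ => f (u + w)) =ᵐ[volume] fun w => f' (u + w) :=
        (measurePreserving_add_left volume u).quasiMeasurePreserving.ae_eq_comp hff'
      filter_upwards [ae_restrict_of_ae h1] with w hw
      rw [hw, hu]
    have e2 : (∫⁻ u in Ioc (0:ℝ) 1, ∫⁻ w in Ioo (-(1:ℝ)/2) (1/2),
          ENNReal.ofReal (‖f' (u + w) - f' u‖ ^ 2 / |w| ^ (1 + 2 * s)))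
        = ∫⁻ w in Ioo (-(1:ℝ)/2) (1/2), ∫⁻ u in Ioc (0:ℝ) 1,
          ENNReal.ofReal (‖f' (u + w) - f' u‖ ^ 2 / |w| ^ (1 + 2 * s)) :=
      lintegral_lintegral_swap hmA.aemeasurable
    have e3 : ∀ᵐ w ∂(volume.restrict (Ioo (-(1:ℝ)/2) (1/2))),
        (∫⁻ u in Ioc (0:ℝ) 1, ENNReal.ofReal (‖f' (u + w) - f' u‖ ^ 2 / |w| ^ (1 + 2 * s)))
          = G' w / ENNReal.ofReal (|w| ^ (1 + 2 * s)) := by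
      have hne : ∀ᵐ w : ℝ ∂volume, w ≠ 0 := by
        have hset : ({0} : Set ℝ) = {w : ℝ | ¬ w ≠ 0} := by ext w; simp
        rw [ae_iff, ← hset]
        exact measure_singleton 0
      filter_upwards [ae_restrict_of_ae hne] with w hw
      have hbpos : (0:ℝ) < |w| ^ (1 + 2 * s) :=
        Real.rpow_pos_of_pos (abs_pos.mpr hw) _
      have hms : Measurable fun u : ℝ => ENNReal.ofReal (‖f' (u + w) - f' u‖ ^ 2) :=
        ENNReal.measurable_ofReal.comp
          (((hf'm.comp (measurable_add_const w)).sub hf'm).norm.pow_const 2)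
      calc (∫⁻ u in Ioc (0:ℝ) 1, ENNReal.ofReal (‖f' (u + w) - f' u‖ ^ 2 / |w| ^ (1 + 2 * s)))
          = ∫⁻ u in Ioc (0:ℝ) 1, ENNReal.ofReal (‖f' (u + w) - f' u‖ ^ 2)
              * (ENNReal.ofReal (|w| ^ (1 + 2 * s)))⁻¹ := by
            refine lintegral_congr fun u => ?_
            rw [ENNReal.ofReal_div_of_pos hbpos, div_eq_mul_inv]
        _ = G' w / ENNReal.ofReal (|w| ^ (1 + 2 * s)) := by
            rw [lintegral_mul_const _ hms, ← div_eq_mul_inv]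
    rw [e1, e2, lintegral_congr_ae e3]
  -- scaling substitution w ↦ τ w
  set T : Set ℝ := Ioo (-|τ|/2) (|τ|/2) with hTdef
  have hpre : (fun w : ℝ => τ * w) ⁻¹' T = Ioo (-(1:ℝ)/2) (1/2) := by
    ext w
    simp only [hTdef, mem_preimage, mem_Ioo]
    rw [show -|τ|/2 = -(|τ|/2) by ring, ← abs_lt, show -(1:ℝ)/2 = -(1/2 : ℝ) by ring,
      ← abs_lt, abs_mul, show |τ|/2 = |τ| * (1/2) by ring, mul_lt_mul_iff_right₀ habs]
  have hpoint : ∀ w : ℝ, G' (τ * w) / ENNReal.ofReal (|w| ^ (1 + 2 * s))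
      = ENNReal.ofReal (|τ| ^ (1 + 2 * s))
        * (G' (τ * w) / ENNReal.ofReal (|τ * w| ^ (1 + 2 * s))) := by
    intro w
    by_cases hw : w = 0
    · simp [hw, hG'0, ENNReal.zero_div]
    · have h1 : |τ * w| ^ (1 + 2 * s) = |τ| ^ (1 + 2 * s) * |w| ^ (1 + 2 * s) := by
        rw [abs_mul, Real.mul_rpow (abs_nonneg _) (abs_nonneg _)]
      rw [h1, ENNReal.ofReal_mul (Real.rpow_nonneg (abs_nonneg _) _), ← mul_div_assoc,
        ENNReal.mul_div_mul_left _ _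
          (ENNReal.ofReal_pos.mpr (Real.rpow_pos_of_pos habs _)).ne' ENNReal.ofReal_ne_top]
  have hemb : MeasurableEmbedding (fun w : ℝ => τ * w) :=
    (Homeomorph.mulLeft₀ τ hτ0).measurableEmbedding
  have hmap : (∫⁻ w in Ioo (-(1:ℝ)/2) (1/2),
        G' (τ * w) / ENNReal.ofReal (|τ * w| ^ (1 + 2 * s)))
      = ENNReal.ofReal |τ⁻¹|
        * ∫⁻ w in T, G' w / ENNReal.ofReal (|w| ^ (1 + 2 * s)) := by
    calc (∫⁻ w in Ioo (-(1:ℝ)/2) (1/2),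
          G' (τ * w) / ENNReal.ofReal (|τ * w| ^ (1 + 2 * s)))
        = ∫⁻ a, G' a / ENNReal.ofReal (|a| ^ (1 + 2 * s))
            ∂(Measure.map (fun w : ℝ => τ * w) (volume.restrict (Ioo (-(1:ℝ)/2) (1/2)))) :=
          (hemb.lintegral_map (fun a => G' a / ENNReal.ofReal (|a| ^ (1 + 2 * s)))).symm
      _ = ∫⁻ a, G' a / ENNReal.ofReal (|a| ^ (1 + 2 * s))
            ∂((Measure.map (fun w : ℝ => τ * w) volume).restrict T) := by
          rw [Measure.restrict_map (measurable_const_mul τ) measurableSet_Ioo, hpre]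
      _ = ∫⁻ a, G' a / ENNReal.ofReal (|a| ^ (1 + 2 * s))
            ∂((ENNReal.ofReal |τ⁻¹| • volume).restrict T) := by
          rw [Real.map_volume_mul_left hτ0]
      _ = ENNReal.ofReal |τ⁻¹|
            * ∫⁻ w in T, G' w / ENNReal.ofReal (|w| ^ (1 + 2 * s)) := by
          rw [Measure.restrict_smul, lintegral_smul_measure, smul_eq_mul]
  have hconst : ENNReal.ofReal (|τ| ^ (1 + 2 * s)) * ENNReal.ofReal |τ⁻¹|
      = ENNReal.ofReal (|τ| ^ (2 * s)) := by
    rw [← ENNReal.ofReal_mul (Real.rpow_nonneg (abs_nonneg _) _)]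
    congr 1
    rw [abs_inv, Real.rpow_add habs, Real.rpow_one, mul_right_comm,
      mul_inv_cancel₀ habs.ne', one_mul]
  calc (∫⁻ w in Ioo (-(1:ℝ)/2) (1/2), G' (τ * w) / ENNReal.ofReal (|w| ^ (1 + 2 * s)))
      = ∫⁻ w in Ioo (-(1:ℝ)/2) (1/2), ENNReal.ofReal (|τ| ^ (1 + 2 * s))
          * (G' (τ * w) / ENNReal.ofReal (|τ * w| ^ (1 + 2 * s))) :=
        lintegral_congr hpoint
    _ = ENNReal.ofReal (|τ| ^ (1 + 2 * s)) * ∫⁻ w in Ioo (-(1:ℝ)/2) (1/2),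
          G' (τ * w) / ENNReal.ofReal (|τ * w| ^ (1 + 2 * s)) :=
        lintegral_const_mul' _ _ ENNReal.ofReal_ne_top
    _ = ENNReal.ofReal (|τ| ^ (2 * s))
          * ∫⁻ w in T, G' w / ENNReal.ofReal (|w| ^ (1 + 2 * s)) := by
        rw [hmap, ← mul_assoc, hconst]
    _ ≤ ENNReal.ofReal (|τ| ^ (2 * s)) * gagliardoSq s f := by
        refine mul_le_mul_right ?_ _
        rw [hgag]
        refine lintegral_mono_set ?_
        refine Ioo_subset_Ioo (by linarith) (by linarith)
    _ = ENNReal.ofReal (|τ₁ - τ₂| ^ (2 * s)) * gagliardoSq s f := by rw [hτdef]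


end
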